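/- arXiv:2601.05906 — 3 statements merged into one kernel-verified Lean document; each statement's English description precedes it below -/
import Mathlib

section
/- Let (X_i)_{i≥1} be independent and identically distributed real-valued random variables with E[X_1^2] < ∞, and let λ > 0. For each R > 0, let N_R be a Poisson random variable with mean λR that is independent of the sequence (X_i)_{i≥1}. Then E[ max_{1≤i≤N_R} X_i^2 ] / R → 0 as R → ∞, where the maximum over an empty index set is taken to be 0. -/
open MeasureTheory ProbabilityTheory Filter
open scoped ENNReal NNReal

lemma aux_fold_le {M : ℝ} (hM : 0 ≤ M) (n : ℕ) (f : ℕ → ℝ) (hf : ∀ i, 0 ≤ f i) :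
    Finset.fold max 0 f (Finset.Icc 1 n)
      ≤ M + ∑ i ∈ Finset.Icc 1 n, (if M < f i then f i else 0) := by
  have hterm : ∀ i, 0 ≤ (if M < f i then f i else 0) := by
    intro i; split; exacts [hf i, le_rfl]
  have hsum : 0 ≤ ∑ i ∈ Finset.Icc 1 n, (if M < f i then f i else 0) :=
    Finset.sum_nonneg fun i _ => hterm i
  rw [Finset.fold_max_le]
  refine ⟨by linarith, fun x hx => ?_⟩
  by_cases h : M < f x
  · have h1 : f x ≤ ∑ i ∈ Finset.Icc 1 n, (if M < f i then f i else 0) := by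
      have := Finset.single_le_sum (f := fun i => if M < f i then f i else 0)
        (fun i _ => hterm i) hx
      simpa [h] using this
    linarith
  · push_neg at h; linarith

lemma aux_fold_meas {Ω : Type*} [MeasurableSpace Ω] (X : ℕ → Ω → ℝ)
    (hXmeas : ∀ i, Measurable (X i)) (n : ℕ) :
    Measurable fun ω => Finset.fold max 0 (fun i => (X i ω) ^ 2) (Finset.Icc 1 n) := by
  induction n with
  | zero => simp [Finset.Icc_eq_empty (by omega : ¬ (1:ℕ) ≤ 0)]
  | succ n ih =>
      have h : ∀ ω, Finset.fold max 0 (fun i => (X i ω) ^ 2) (Finset.Icc 1 (n+1))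
          = max ((X (n+1) ω) ^ 2) (Finset.fold max 0 (fun i => (X i ω) ^ 2) (Finset.Icc 1 n)) := by
        intro ω
        rw [← Finset.insert_Icc_right_eq_Icc_add_one (by omega), Finset.fold_insert (by simp)]
      simp_rw [h]
      exact ((hXmeas _).pow_const 2).max ih

lemma aux_poisson_mean {μ : ℝ} (hμ : 0 ≤ μ) :
    ∑' k : ℕ, (k : ℝ) * (Real.exp (-μ) * μ ^ k / (Nat.factorial k)) = μ := by
  have hsummand : ∀ k : ℕ, (((k:ℕ)+1 : ℕ) : ℝ) * (Real.exp (-μ) * μ ^ (k+1) / (Nat.factorial (k+1)))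
      = Real.exp (-μ) * μ * (μ ^ k / (Nat.factorial k)) := by
    intro k
    have h1 : (Nat.factorial (k+1) : ℝ) = (k+1) * Nat.factorial k := by
      rw [Nat.factorial_succ]; push_cast; ring
    have h2 : (Nat.factorial k : ℝ) ≠ 0 := Nat.cast_ne_zero.2 (Nat.factorial_ne_zero k)
    have h3 : ((k:ℝ)+1) ≠ 0 := by positivity
    rw [h1]; push_cast; field_simp; ring
  have hs0 : Summable fun k : ℕ => μ ^ k / (Nat.factorial k : ℝ) :=
    Real.summable_pow_div_factorial μ
  have hexp : ∑' k : ℕ, μ ^ k / (Nat.factorial k : ℝ) = Real.exp μ := by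
    rw [Real.exp_eq_exp_ℝ, NormedSpace.exp_eq_tsum_div]
  have hs1 : Summable fun k : ℕ => (k : ℝ) * (Real.exp (-μ) * μ ^ k / (Nat.factorial k)) := by
    rw [← summable_nat_add_iff 1]
    refine (summable_congr fun k => ?_).mpr (hs0.mul_left (Real.exp (-μ) * μ))
    exact hsummand k
  rw [Summable.tsum_eq_zero_add hs1]
  simp only [Nat.cast_zero, zero_mul, zero_add]
  calc ∑' k : ℕ, (((k:ℕ)+1 : ℕ) : ℝ) * (Real.exp (-μ) * μ ^ (k+1) / (Nat.factorial (k+1)))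
      = ∑' k : ℕ, Real.exp (-μ) * μ * (μ ^ k / (Nat.factorial k)) := tsum_congr hsummand
    _ = Real.exp (-μ) * μ * Real.exp μ := by rw [tsum_mul_left, hexp]
    _ = μ := by rw [Real.exp_neg]; field_simp

lemma aux_tail_sum {Ω : Type*} [MeasurableSpace Ω] (P : Measure Ω) [IsProbabilityMeasure P]
    (Nf : Ω → ℕ) (hN : Measurable Nf) (μ : ℝ) (hμ : 0 ≤ μ)
    (hp : ∀ k : ℕ, P {ω | Nf ω = k}
      = ENNReal.ofReal (Real.exp (-μ) * μ ^ k / (Nat.factorial k))) :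
    ∑' j : ℕ, P {ω | 1 ≤ j ∧ j ≤ Nf ω} = ENNReal.ofReal μ := by
  have hnn : ∀ k : ℕ, 0 ≤ Real.exp (-μ) * μ ^ k / (Nat.factorial k) := by
    intro k; positivity
  have step1 : ∀ j : ℕ, P {ω | 1 ≤ j ∧ j ≤ Nf ω}
      = ∑' k : ℕ, (if 1 ≤ j ∧ j ≤ k then P {ω | Nf ω = k} else 0) := by
    intro j
    have hset : {ω | 1 ≤ j ∧ j ≤ Nf ω} = ⋃ k : ℕ, {ω | Nf ω = k ∧ 1 ≤ j ∧ j ≤ k} := by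
      ext ω; simp only [Set.mem_setOf_eq, Set.mem_iUnion]
      constructor
      · rintro ⟨h1, h2⟩; exact ⟨Nf ω, rfl, h1, h2⟩
      · rintro ⟨k, hk, h1, h2⟩; exact ⟨h1, hk ▸ h2⟩
    rw [hset, measure_iUnion]
    · congr 1; funext k
      by_cases hc : 1 ≤ j ∧ j ≤ k
      · have : {ω | Nf ω = k ∧ 1 ≤ j ∧ j ≤ k} = {ω | Nf ω = k} := by
          ext ω; simp [hc.1, hc.2]
        rw [this, if_pos hc]
      · have : {ω | Nf ω = k ∧ 1 ≤ j ∧ j ≤ k} = ∅ := by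
          ext ω; simp only [Set.mem_setOf_eq, Set.mem_empty_iff_false, iff_false]
          rintro ⟨_, h⟩; exact hc h
        rw [this, if_neg hc, measure_empty]
    · intro k k' hkk'
      simp only [Function.onFun, Set.disjoint_left]
      rintro ω ⟨h1, -⟩ ⟨h2, -⟩
      exact hkk' (h1 ▸ h2)
    · intro k
      exact hN (by trivial : MeasurableSet {n : ℕ | n = k ∧ 1 ≤ j ∧ j ≤ k})
  simp_rw [step1]
  rw [ENNReal.tsum_comm]
  have step2 : ∀ k : ℕ, (∑' j : ℕ, (if 1 ≤ j ∧ j ≤ k then P {ω | Nf ω = k} else 0))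
      = (k : ℝ≥0∞) * P {ω | Nf ω = k} := by
    intro k
    rw [tsum_eq_sum (s := Finset.Icc 1 k) (fun j hj => by
      rw [if_neg]; simpa [Finset.mem_Icc] using hj)]
    rw [Finset.sum_congr rfl (fun j hj => if_pos (Finset.mem_Icc.mp hj)),
      Finset.sum_const, Nat.card_Icc, nsmul_eq_mul]
    simp
  simp_rw [step2, hp]
  have step3 : ∀ k : ℕ, (k : ℝ≥0∞) * ENNReal.ofReal (Real.exp (-μ) * μ ^ k / (Nat.factorial k))
      = ENNReal.ofReal ((k:ℝ) * (Real.exp (-μ) * μ ^ k / (Nat.factorial k))) := by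
    intro k
    rw [ENNReal.ofReal_mul (by positivity), ENNReal.ofReal_natCast]
  simp_rw [step3]
  rw [← ENNReal.ofReal_tsum_of_nonneg (fun k => by positivity)]
  · rw [aux_poisson_mean hμ]
  · have hs0 : Summable fun k : ℕ => μ ^ k / (Nat.factorial k : ℝ) :=
      Real.summable_pow_div_factorial μ
    have : Summable fun k : ℕ => Real.exp (-μ) * μ * (μ ^ k / (Nat.factorial k : ℝ)) :=
      hs0.mul_left _
    rw [← summable_nat_add_iff 1]
    refine (summable_congr fun k => ?_).mpr this
    have h1 : (Nat.factorial (k+1) : ℝ) = (k+1) * Nat.factorial k := by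
      rw [Nat.factorial_succ]; push_cast; ring
    have h2 : (Nat.factorial k : ℝ) ≠ 0 := Nat.cast_ne_zero.2 (Nat.factorial_ne_zero k)
    rw [h1]; push_cast; field_simp; ring

lemma aux_main_bound {Ω : Type*} [MeasurableSpace Ω] (P : Measure Ω) [IsProbabilityMeasure P]
    (X : ℕ → Ω → ℝ) (hXmeas : ∀ i, Measurable (X i))
    (hXident : ∀ i, Measure.map (X i) P = Measure.map (X 1) P)
    (hXsq : Integrable (fun ω => (X 1 ω) ^ 2) P)
    (Nf : Ω → ℕ) (hN : Measurable Nf) (μ : ℝ) (hμ : 0 ≤ μ)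
    (hp : ∀ k : ℕ, P {ω | Nf ω = k}
      = ENNReal.ofReal (Real.exp (-μ) * μ ^ k / (Nat.factorial k)))
    (hind : IndepFun Nf (fun ω i => X i ω) P)
    (M : ℝ) (hM : 0 ≤ M) :
    ∫ ω, Finset.fold max 0 (fun i => (X i ω) ^ 2) (Finset.Icc 1 (Nf ω)) ∂P
      ≤ M + μ * ∫ ω, (if M < (X 1 ω) ^ 2 then (X 1 ω) ^ 2 else 0) ∂P := by
  classical
  set G : ℝ → ℝ≥0∞ := fun x => ENNReal.ofReal (if M < x ^ 2 then x ^ 2 else 0) with hGdef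
  have hxsq : Measurable fun x : ℝ => x ^ 2 := measurable_id.pow_const 2
  have hG : Measurable G :=
    ENNReal.measurable_ofReal.comp
      (Measurable.ite (measurableSet_lt measurable_const hxsq) hxsq measurable_const)
  set g : Ω → ℝ := fun ω => if M < (X 1 ω) ^ 2 then (X 1 ω) ^ 2 else 0 with hgdef
  have hgmeas : Measurable g :=
    (Measurable.ite (measurableSet_lt measurable_const hxsq) hxsq measurable_const).comp (hXmeas 1)
  have hgnonneg : ∀ ω, 0 ≤ g ω := fun ω => by
    simp only [hgdef]; split; exacts [sq_nonneg _, le_rfl]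
  set c : ℝ≥0∞ := ∫⁻ ω, G (X 1 ω) ∂P with hcdef
  have hc_le : c ≤ ∫⁻ ω, ENNReal.ofReal ((X 1 ω) ^ 2) ∂P := by
    refine lintegral_mono fun ω => ENNReal.ofReal_le_ofReal ?_
    split; exacts [le_rfl, sq_nonneg _]
  have hXsq_fin : ∫⁻ ω, ENNReal.ofReal ((X 1 ω) ^ 2) ∂P ≠ ⊤ := by
    have := hXsq.hasFiniteIntegral
    rw [hasFiniteIntegral_iff_ofReal (Filter.Eventually.of_forall fun ω => sq_nonneg _)] at this
    exact this.ne
  have hc_fin : c ≠ ⊤ := fun h => hXsq_fin (top_le_iff.mp (h ▸ hc_le))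
  have hgc : ∫ ω, g ω ∂P = c.toReal := by
    rw [integral_eq_lintegral_of_nonneg_ae (Filter.Eventually.of_forall hgnonneg)
      hgmeas.aestronglyMeasurable]
  -- measurability of the fold composed with Nf
  have hfoldmeas : Measurable fun ω =>
      Finset.fold max 0 (fun i => (X i ω) ^ 2) (Finset.Icc 1 (Nf ω)) := by
    have h1 : Measurable fun p : Ω × ℕ =>
        Finset.fold max 0 (fun i => (X i p.1) ^ 2) (Finset.Icc 1 p.2) :=
      measurable_from_prod_countable_left fun n => aux_fold_meas X hXmeas n
    exact h1.comp (measurable_id.prodMk hN)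
  have hfoldnonneg : ∀ ω, (0:ℝ) ≤
      Finset.fold max 0 (fun i => (X i ω) ^ 2) (Finset.Icc 1 (Nf ω)) := by
    intro ω; exact (Finset.le_fold_max _).mpr (Or.inl le_rfl)
  set L : ℝ≥0∞ := ∫⁻ ω, ENNReal.ofReal
      (Finset.fold max 0 (fun i => (X i ω) ^ 2) (Finset.Icc 1 (Nf ω))) ∂P with hLdef
  have hEL : ∫ ω, Finset.fold max 0 (fun i => (X i ω) ^ 2) (Finset.Icc 1 (Nf ω)) ∂P
      = L.toReal := by
    rw [integral_eq_lintegral_of_nonneg_ae (Filter.Eventually.of_forall hfoldnonneg)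
      hfoldmeas.aestronglyMeasurable]
  -- the summands
  set W : ℕ → Ω → ℝ≥0∞ := fun j ω =>
      (if j ∈ Finset.Icc 1 (Nf ω) then (1:ℝ≥0∞) else 0) * G (X j ω) with hWdef
  have hWmeas : ∀ j, Measurable (W j) := by
    intro j
    exact ((measurable_of_countable (fun n : ℕ => if j ∈ Finset.Icc 1 n then (1:ℝ≥0∞)
      else 0)).comp hN).mul (hG.comp (hXmeas j))
  -- pointwise bound
  have hpt : ∀ ω, ENNReal.ofReal
        (Finset.fold max 0 (fun i => (X i ω) ^ 2) (Finset.Icc 1 (Nf ω)))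
      ≤ ENNReal.ofReal M + ∑' j : ℕ, W j ω := by
    intro ω
    have h1 := aux_fold_le hM (Nf ω) (fun i => (X i ω) ^ 2) (fun i => sq_nonneg _)
    have h2 : (∑' j : ℕ, W j ω) = ∑ j ∈ Finset.Icc 1 (Nf ω), W j ω :=
      tsum_eq_sum (fun j hj => by
        show (if j ∈ Finset.Icc 1 (Nf ω) then (1:ℝ≥0∞) else 0) * G (X j ω) = 0
        rw [if_neg hj, zero_mul])
    calc ENNReal.ofReal (Finset.fold max 0 (fun i => (X i ω) ^ 2) (Finset.Icc 1 (Nf ω)))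
        ≤ ENNReal.ofReal (M + ∑ i ∈ Finset.Icc 1 (Nf ω),
            (if M < (X i ω) ^ 2 then (X i ω) ^ 2 else 0)) := ENNReal.ofReal_le_ofReal h1
      _ = ENNReal.ofReal M + ENNReal.ofReal (∑ i ∈ Finset.Icc 1 (Nf ω),
            (if M < (X i ω) ^ 2 then (X i ω) ^ 2 else 0)) := by
          rw [ENNReal.ofReal_add hM (Finset.sum_nonneg fun i _ => by
            split; exacts [sq_nonneg _, le_rfl])]
      _ = ENNReal.ofReal M + ∑ i ∈ Finset.Icc 1 (Nf ω), G (X i ω) := by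
          rw [ENNReal.ofReal_sum_of_nonneg (fun i _ => by
            split; exacts [sq_nonneg _, le_rfl])]
      _ = ENNReal.ofReal M + ∑' j : ℕ, W j ω := by
          rw [h2]
          congr 1
          exact Finset.sum_congr rfl fun j hj => by
            show G (X j ω) = (if j ∈ Finset.Icc 1 (Nf ω) then (1:ℝ≥0∞) else 0) * G (X j ω)
            rw [if_pos hj, one_mul]
  -- integrate the pointwise bound
  have hL1 : L ≤ ENNReal.ofReal M + ∑' j : ℕ, ∫⁻ ω, W j ω ∂P := by
    calc L ≤ ∫⁻ ω, (ENNReal.ofReal M + ∑' j : ℕ, W j ω) ∂P := lintegral_mono hpt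
      _ = ENNReal.ofReal M + ∫⁻ ω, ∑' j : ℕ, W j ω ∂P := by
          rw [lintegral_add_left measurable_const, lintegral_const, measure_univ, mul_one]
      _ = ENNReal.ofReal M + ∑' j : ℕ, ∫⁻ ω, W j ω ∂P := by
          rw [lintegral_tsum fun j => (hWmeas j).aemeasurable]
  -- compute each summand via independence
  have hWint : ∀ j : ℕ, ∫⁻ ω, W j ω ∂P = P {ω | 1 ≤ j ∧ j ≤ Nf ω} * c := by
    intro j
    set F : ℕ → ℝ≥0∞ := fun n => if j ∈ Finset.Icc 1 n then (1:ℝ≥0∞) else 0 with hFdef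
    set ψ : (ℕ → ℝ) → ℝ≥0∞ := fun v => G (v j) with hψdef
    have hFmeas : Measurable F := measurable_of_countable F
    have hψmeas : Measurable ψ := hG.comp (measurable_pi_apply j)
    have hindep2 : IndepFun (F ∘ Nf) (ψ ∘ fun ω i => X i ω) P := hind.comp hFmeas hψmeas
    have heq : ∫⁻ ω, W j ω ∂P = (∫⁻ ω, (F ∘ Nf) ω ∂P) * ∫⁻ ω, (ψ ∘ fun ω' i => X i ω') ω ∂P :=
      lintegral_mul_eq_lintegral_mul_lintegral_of_indepFun''
        ((hFmeas.comp hN).aemeasurable) ((hψmeas.comp (measurable_pi_lambda _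
          fun i => hXmeas i)).aemeasurable) hindep2
    rw [heq]
    congr 1
    · have hset : (F ∘ Nf) = ({ω | 1 ≤ j ∧ j ≤ Nf ω}.indicator (1 : Ω → ℝ≥0∞)) := by
        funext ω
        by_cases h : 1 ≤ j ∧ j ≤ Nf ω <;>
          simp [hFdef, Function.comp, Set.indicator_apply, Finset.mem_Icc, h]
      have hms : MeasurableSet (Nf ⁻¹' {n : ℕ | 1 ≤ j ∧ j ≤ n}) := hN trivial
      have hms' : MeasurableSet {ω | 1 ≤ j ∧ j ≤ Nf ω} := hms
      rw [hset, lintegral_indicator_one hms']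
    · have h1 : ∫⁻ ω, (ψ ∘ fun ω' i => X i ω') ω ∂P = ∫⁻ ω, G (X j ω) ∂P := rfl
      rw [h1, ← lintegral_map hG (hXmeas j), hXident j, lintegral_map hG (hXmeas 1)]
  have hL2 : L ≤ ENNReal.ofReal M + ENNReal.ofReal μ * c := by
    refine hL1.trans ?_
    rw [← aux_tail_sum P Nf hN μ hμ hp, ← ENNReal.tsum_mul_right]
    exact le_of_eq (by rw [tsum_congr hWint])
  -- convert to real
  have hB_fin : ENNReal.ofReal M + ENNReal.ofReal μ * c ≠ ⊤ := by
    exact ENNReal.add_ne_top.mpr ⟨ENNReal.ofReal_ne_top,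
      ENNReal.mul_ne_top ENNReal.ofReal_ne_top hc_fin⟩
  have := ENNReal.toReal_mono hB_fin hL2
  rw [ENNReal.toReal_add ENNReal.ofReal_ne_top
      (ENNReal.mul_ne_top ENNReal.ofReal_ne_top hc_fin), ENNReal.toReal_ofReal hM,
      ENNReal.toReal_mul, ENNReal.toReal_ofReal hμ] at this
  rw [hEL, hgc]
  exact this

lemma aux_trunc_tendsto {Ω : Type*} [MeasurableSpace Ω] (P : Measure Ω) [IsProbabilityMeasure P]
    (X1 : Ω → ℝ) (hX1 : Measurable X1) (hXsq : Integrable (fun ω => (X1 ω) ^ 2) P) :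
    Tendsto (fun n : ℕ => ∫ ω, (if (n:ℝ) < (X1 ω) ^ 2 then (X1 ω) ^ 2 else 0) ∂P)
      atTop (nhds 0) := by
  have hxsq : Measurable fun x : ℝ => x ^ 2 := measurable_id.pow_const 2
  have h := MeasureTheory.tendsto_integral_of_dominated_convergence
    (F := fun n : ℕ => fun ω => (if (n:ℝ) < (X1 ω) ^ 2 then (X1 ω) ^ 2 else 0))
    (f := fun _ => (0:ℝ)) (bound := fun ω => (X1 ω) ^ 2)
    (fun n => ((Measurable.ite (measurableSet_lt measurable_const hxsq) hxsq
      measurable_const).comp hX1).aestronglyMeasurable)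
    hXsq
    (fun n => Filter.Eventually.of_forall fun ω => by
      rw [Real.norm_eq_abs]
      split
      · rw [abs_of_nonneg (sq_nonneg _)]
      · rw [abs_zero]; exact sq_nonneg _)
    (Filter.Eventually.of_forall fun ω => by
      have hev : ∀ᶠ n : ℕ in atTop,
          (if (n:ℝ) < (X1 ω) ^ 2 then (X1 ω) ^ 2 else 0) = 0 := by
        filter_upwards [eventually_ge_atTop ⌈(X1 ω) ^ 2⌉₊] with n hn
        rw [if_neg]
        push_neg
        exact (Nat.le_ceil _).trans (Nat.cast_le.mpr hn)
      exact Tendsto.congr' (by filter_upwards [hev] with n hn; exact hn.symm)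
        tendsto_const_nhds)
  simpa using h

/-- Let `(X i)` be i.i.d. real random variables with `E[X₁²] < ∞`, and let
`λ > 0`. For each `R > 0`, let `N R` be a Poisson random variable with mean `λ·R`, independent
of the sequence `(X i)`. Then `E[max_{1 ≤ i ≤ N R} (X i)²] / R → 0` as `R → ∞` (the maximum
over an empty index set being `0`). -/
theorem poisson_max_square_expectation_tendsto_zero
    {Ω : Type*} [MeasurableSpace Ω] (P : Measure Ω) [IsProbabilityMeasure P]
    (X : ℕ → Ω → ℝ) (hXmeas : ∀ i, Measurable (X i))
    (hXindep : iIndepFun X P)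
    (hXident : ∀ i, Measure.map (X i) P = Measure.map (X 1) P)
    (hXsq : Integrable (fun ω => (X 1 ω) ^ 2) P)
    (lam : ℝ) (hlam : 0 < lam)
    (N : ℝ → Ω → ℕ) (hNmeas : ∀ R, Measurable (N R))
    (hNpoisson : ∀ R > 0, ∀ k : ℕ,
      P {ω | N R ω = k} =
        ENNReal.ofReal (Real.exp (-(lam * R)) * (lam * R) ^ k / (Nat.factorial k)))
    (hNindep : ∀ R > 0, IndepFun (N R) (fun ω i => X i ω) P) :
    Tendsto
      (fun R : ℝ =>
        (∫ ω, Finset.fold max 0 (fun i => (X i ω) ^ 2) (Finset.Icc 1 (N R ω)) ∂P) / R)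
      atTop (nhds 0) := by
  set I : ℝ → ℝ := fun M => ∫ ω, (if M < (X 1 ω) ^ 2 then (X 1 ω) ^ 2 else 0) ∂P with hIdef
  have hI0 : ∀ M, 0 ≤ I M := fun M =>
    integral_nonneg fun ω => by split; exacts [sq_nonneg _, le_rfl]
  have hItend : Tendsto (fun n : ℕ => lam * I n) atTop (nhds 0) := by
    have := (aux_trunc_tendsto P (X 1) (hXmeas 1) hXsq).const_mul lam
    simpa using this
  rw [Metric.tendsto_atTop]
  intro ε hε
  obtain ⟨n, hn⟩ := (hItend.eventually_lt_const (by positivity : (0:ℝ) < ε/2)).exists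
  refine ⟨max 1 (2*((n:ℝ)+1)/ε), fun R hR => ?_⟩
  have hR1 : (1:ℝ) ≤ R := le_trans (le_max_left _ _) hR
  have hR2 : 2*((n:ℝ)+1)/ε ≤ R := le_trans (le_max_right _ _) hR
  have hRpos : (0:ℝ) < R := lt_of_lt_of_le one_pos hR1
  have hfoldnonneg : ∀ ω, (0:ℝ) ≤
      Finset.fold max 0 (fun i => (X i ω) ^ 2) (Finset.Icc 1 (N R ω)) :=
    fun ω => (Finset.le_fold_max _).mpr (Or.inl le_rfl)
  set E : ℝ := ∫ ω, Finset.fold max 0 (fun i => (X i ω) ^ 2) (Finset.Icc 1 (N R ω)) ∂P with hEdef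
  have hE0 : 0 ≤ E := integral_nonneg hfoldnonneg
  have hbound : E ≤ (n:ℝ) + (lam * R) * I n :=
    aux_main_bound P X hXmeas hXident hXsq (N R) (hNmeas R) (lam * R)
      (by positivity) (hNpoisson R hRpos) (hNindep R hRpos) (n:ℝ) (Nat.cast_nonneg n)
  have hdiv : E / R ≤ (n:ℝ)/R + lam * I n := by
    have h1 : E / R ≤ ((n:ℝ) + (lam * R) * I n) / R := by
      exact div_le_div_of_nonneg_right hbound hRpos.le
    have h2 : ((n:ℝ) + (lam * R) * I n) / R = (n:ℝ)/R + lam * I n := by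
      field_simp
    linarith [h1, h2.le, h2.ge]
  have hnR : (n:ℝ)/R < ε/2 := by
    rw [div_lt_iff₀ hRpos]
    have h3 : 2*((n:ℝ)+1) ≤ ε * R := by
      rw [div_le_iff₀ hε] at hR2
      linarith [hR2]
    nlinarith
  have : E / R < ε := by
    calc E / R ≤ (n:ℝ)/R + lam * I n := hdiv
      _ < ε/2 + ε/2 := by exact add_lt_add hnR hn
      _ = ε := by ring
  rw [Real.dist_eq, sub_zero, abs_of_nonneg (div_nonneg hE0 hRpos.le)]
  exact this
end

section
/- Let (X_i)_{i≥1} be independent and identically distributed real-valued random variables with E[X_1^2] < ∞, and let N be a Poisson random variable with mean μ > 0 that is independent of the sequence (X_i)_{i≥1}. Then for every y > 0, E[ max_{1≤i≤N} X_i^2 ] ≤ y^2 + μ · E[ X_1^2 · 1_{|X_1| > y} ], where the maximum over an empty index set is taken to be 0. -/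
open MeasureTheory ProbabilityTheory Filter

open scoped ENNReal

lemma poisson_mean_series (μ : ℝ) (hμ : 0 < μ) :
    ∑' n : ℕ, (n : ℝ≥0∞) * ENNReal.ofReal (Real.exp (-μ) * μ ^ n / (Nat.factorial n))
      = ENNReal.ofReal μ := by
  have ha : Summable (fun n : ℕ => μ ^ n / n.factorial) := Real.summable_pow_div_factorial μ
  have hsum_a : ∑' n : ℕ, μ ^ n / (n.factorial : ℝ) = Real.exp μ := by
    rw [Real.exp_eq_exp_ℝ, NormedSpace.exp_eq_tsum_div]
  set f : ℕ → ℝ := fun n => (n : ℝ) * (Real.exp (-μ) * μ ^ n / n.factorial) with hf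
  have hshift : ∀ n : ℕ, f (n + 1) = (Real.exp (-μ) * μ) * (μ ^ n / n.factorial) := by
    intro n
    have h1 : ((n + 1 : ℕ) : ℝ) ≠ 0 := by positivity
    have h2 : (n.factorial : ℝ) ≠ 0 := Nat.cast_ne_zero.mpr n.factorial_ne_zero
    simp only [hf, Nat.factorial_succ]
    push_cast
    field_simp
    ring
  have hfs : Summable f := by
    rw [← summable_nat_add_iff 1]
    simpa [hshift] using ha.mul_left (Real.exp (-μ) * μ)
  have hexp : Real.exp (-μ) * Real.exp μ = 1 := by rw [← Real.exp_add]; simp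
  have htsum : ∑' n, f n = μ := by
    rw [Summable.tsum_eq_zero_add hfs]
    simp only [hshift]
    rw [tsum_mul_left, hsum_a]
    have hf0 : f 0 = 0 := by simp [hf]
    rw [hf0]
    nlinarith [hexp]
  have hnn : ∀ n : ℕ, 0 ≤ f n := by
    intro n
    have : (0:ℝ) < Real.exp (-μ) := Real.exp_pos _
    have : (0:ℝ) < (n.factorial : ℝ) := by positivity
    simp only [hf]
    positivity
  calc ∑' n : ℕ, (n : ℝ≥0∞) * ENNReal.ofReal (Real.exp (-μ) * μ ^ n / (Nat.factorial n))
      = ∑' n : ℕ, ENNReal.ofReal (f n) := by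
        refine tsum_congr fun n => ?_
        rw [← ENNReal.ofReal_natCast n, ← ENNReal.ofReal_mul (Nat.cast_nonneg n)]
    _ = ENNReal.ofReal (∑' n, f n) := (ENNReal.ofReal_tsum_of_nonneg hnn hfs).symm
    _ = ENNReal.ofReal μ := by rw [htsum]

/-- Let `(X i)` be i.i.d. real random variables with `E[X₁²] < ∞`, and let `N`
be a Poisson random variable with mean `μ > 0`, independent of the sequence `(X i)`. Then for
every `y > 0`, `E[max_{1 ≤ i ≤ N} (X i)²] ≤ y² + μ · E[X₁² · 1_{|X₁| > y}]` (the maximum over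
an empty index set being `0`). -/
theorem poisson_max_square_truncation_bound
    {Ω : Type*} [MeasurableSpace Ω] (P : Measure Ω) [IsProbabilityMeasure P]
    (X : ℕ → Ω → ℝ) (hXmeas : ∀ i, Measurable (X i))
    (hXindep : iIndepFun X P)
    (hXident : ∀ i, Measure.map (X i) P = Measure.map (X 1) P)
    (hXsq : Integrable (fun ω => (X 1 ω) ^ 2) P)
    (μ : ℝ) (hμ : 0 < μ)
    (N : Ω → ℕ) (hNmeas : Measurable N)
    (hNpoisson : ∀ k : ℕ,
      P {ω | N ω = k} = ENNReal.ofReal (Real.exp (-μ) * μ ^ k / (Nat.factorial k)))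
    (hNindep : IndepFun N (fun ω i => X i ω) P) :
    ∀ y > 0,
      ∫⁻ ω, ENNReal.ofReal (Finset.fold max 0 (fun i => (X i ω) ^ 2) (Finset.Icc 1 (N ω))) ∂P
        ≤ ENNReal.ofReal (y ^ 2)
          + ENNReal.ofReal μ *
              ∫⁻ ω, ENNReal.ofReal (if y < |X 1 ω| then (X 1 ω) ^ 2 else 0) ∂P := by
  intro y hy
  -- truncation function
  have hhmeas : Measurable (fun x : ℝ => if y < |x| then x ^ 2 else 0) := by
    refine Measurable.ite ?_ (measurable_id.pow_const 2) measurable_const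
    exact measurableSet_lt measurable_const measurable_abs
  have hhnn : ∀ x : ℝ, 0 ≤ if y < |x| then x ^ 2 else 0 := by
    intro x; split <;> positivity
  set F : ℕ → Ω → ℝ≥0∞ :=
    fun i ω => ENNReal.ofReal (if y < |X i ω| then (X i ω) ^ 2 else 0) with hF
  have hFmeas : ∀ i, Measurable (F i) :=
    fun i => ENNReal.measurable_ofReal.comp (hhmeas.comp (hXmeas i))
  set E₁ : ℝ≥0∞ := ∫⁻ ω, F 1 ω ∂P with hE₁
  have hEi : ∀ i, ∫⁻ ω, F i ω ∂P = E₁ := by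
    intro i
    have h1 : ∫⁻ ω, F i ω ∂P
        = ∫⁻ x, ENNReal.ofReal (if y < |x| then x ^ 2 else 0) ∂(P.map (X i)) :=
      (lintegral_map (ENNReal.measurable_ofReal.comp hhmeas) (hXmeas i)).symm
    have h2 : ∫⁻ ω, F 1 ω ∂P
        = ∫⁻ x, ENNReal.ofReal (if y < |x| then x ^ 2 else 0) ∂(P.map (X 1)) :=
      (lintegral_map (ENNReal.measurable_ofReal.comp hhmeas) (hXmeas 1)).symm
    rw [h1, hXident i, ← h2]
  -- pointwise bound
  have hpt : ∀ ω, ENNReal.ofReal (Finset.fold max 0 (fun i => (X i ω) ^ 2) (Finset.Icc 1 (N ω)))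
      ≤ ENNReal.ofReal (y ^ 2) + ∑ i ∈ Finset.Icc 1 (N ω), F i ω := by
    intro ω
    have hsumnn : (0:ℝ) ≤ ∑ i ∈ Finset.Icc 1 (N ω), (if y < |X i ω| then (X i ω) ^ 2 else 0) :=
      Finset.sum_nonneg fun i _ => hhnn _
    have hr : Finset.fold max 0 (fun i => (X i ω) ^ 2) (Finset.Icc 1 (N ω))
        ≤ y ^ 2 + ∑ i ∈ Finset.Icc 1 (N ω), (if y < |X i ω| then (X i ω) ^ 2 else 0) := by
      rw [Finset.fold_max_le]
      refine ⟨by positivity, fun i hi => ?_⟩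
      by_cases hcase : y < |X i ω|
      · have h3 : (if y < |X i ω| then (X i ω) ^ 2 else 0)
            ≤ ∑ j ∈ Finset.Icc 1 (N ω), (if y < |X j ω| then (X j ω) ^ 2 else 0) :=
          Finset.single_le_sum (fun j _ => hhnn (X j ω)) hi
        rw [if_pos hcase] at h3
        nlinarith [sq_nonneg y]
      · push_neg at hcase
        have h4 : (X i ω) ^ 2 ≤ y ^ 2 := by
          have := pow_le_pow_left₀ (abs_nonneg (X i ω)) hcase 2
          rwa [sq_abs] at this
        linarith
    calc ENNReal.ofReal (Finset.fold max 0 (fun i => (X i ω) ^ 2) (Finset.Icc 1 (N ω)))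
        ≤ ENNReal.ofReal (y ^ 2
            + ∑ i ∈ Finset.Icc 1 (N ω), (if y < |X i ω| then (X i ω) ^ 2 else 0)) :=
          ENNReal.ofReal_le_ofReal hr
      _ = ENNReal.ofReal (y ^ 2) + ENNReal.ofReal
            (∑ i ∈ Finset.Icc 1 (N ω), (if y < |X i ω| then (X i ω) ^ 2 else 0)) :=
          ENNReal.ofReal_add (by positivity) hsumnn
      _ = ENNReal.ofReal (y ^ 2) + ∑ i ∈ Finset.Icc 1 (N ω), F i ω := by
          rw [ENNReal.ofReal_sum_of_nonneg fun i _ => hhnn _]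
  -- key identity
  have hkey : ∫⁻ ω, ∑ i ∈ Finset.Icc 1 (N ω), F i ω ∂P = ENNReal.ofReal μ * E₁ := by
    have hdecomp : ∀ ω, (∑ i ∈ Finset.Icc 1 (N ω), F i ω)
        = ∑' n : ℕ, Set.indicator {ω' | N ω' = n}
            (fun ω' => ∑ i ∈ Finset.Icc 1 n, F i ω') ω := by
      intro ω
      rw [tsum_eq_single (N ω)]
      · rw [Set.indicator_of_mem (by simp : ω ∈ {ω' | N ω' = N ω})]
      · intro n hn
        exact Set.indicator_of_notMem (by simpa [eq_comm] using hn) _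
    have hGmeas : ∀ n : ℕ, Measurable (Set.indicator {ω' | N ω' = n}
        (fun ω' => ∑ i ∈ Finset.Icc 1 n, F i ω')) := by
      intro n
      exact Measurable.indicator (Finset.measurable_sum _ fun i _ => hFmeas i)
        (hNmeas (measurableSet_singleton n))
    have hterm : ∀ n : ℕ, ∫⁻ ω, Set.indicator {ω' | N ω' = n}
        (fun ω' => ∑ i ∈ Finset.Icc 1 n, F i ω') ω ∂P
        = P {ω | N ω = n} * ((n : ℝ≥0∞) * E₁) := by
      intro n
      set φ : ℕ → ℝ≥0∞ := fun m => if m = n then 1 else 0 with hφ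
      set ψ : (ℕ → ℝ) → ℝ≥0∞ :=
        fun v => ∑ i ∈ Finset.Icc 1 n, ENNReal.ofReal (if y < |v i| then (v i) ^ 2 else 0)
        with hψ
      have hφmeas : Measurable φ := measurable_from_top
      have hψmeas : Measurable ψ :=
        Finset.measurable_sum _ fun i _ =>
          ENNReal.measurable_ofReal.comp (hhmeas.comp (measurable_pi_apply i))
      have hindep : IndepFun (fun ω => φ (N ω)) (fun ω => ψ (fun i => X i ω)) P :=
        hNindep.comp hφmeas hψmeas
      have heq : (fun ω => Set.indicator {ω' | N ω' = n}
          (fun ω' => ∑ i ∈ Finset.Icc 1 n, F i ω') ω)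
          = fun ω => (φ ∘ N) ω * (ψ ∘ (fun ω i => X i ω)) ω := by
        ext ω
        by_cases hω : N ω = n <;>
          simp [Set.indicator, hω, hφ, hψ, hF, Function.comp]
      rw [heq, lintegral_mul_eq_lintegral_mul_lintegral_of_indepFun''
        ((hφmeas.comp hNmeas).aemeasurable)
        ((hψmeas.comp (measurable_pi_lambda _ hXmeas)).aemeasurable) hindep]
      congr 1
      · have h5 : (φ ∘ N) = Set.indicator {ω | N ω = n} (1 : Ω → ℝ≥0∞) := by
          ext ω
          by_cases hω : N ω = n <;> simp [Set.indicator, hω, hφ, Function.comp]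
        rw [h5]
        exact lintegral_indicator_one
          (show MeasurableSet {ω | N ω = n} from hNmeas (measurableSet_singleton n))
      · have : ∫⁻ ω, (ψ ∘ (fun ω i => X i ω)) ω ∂P = ∑ i ∈ Finset.Icc 1 n, ∫⁻ ω, F i ω ∂P := by
          simp only [hψ, Function.comp]
          exact lintegral_finset_sum _ fun i _ => hFmeas i
        rw [this]
        simp [hEi, Finset.sum_const, Nat.card_Icc, nsmul_eq_mul]
    calc ∫⁻ ω, ∑ i ∈ Finset.Icc 1 (N ω), F i ω ∂P
        = ∫⁻ ω, ∑' n : ℕ, Set.indicator {ω' | N ω' = n}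
            (fun ω' => ∑ i ∈ Finset.Icc 1 n, F i ω') ω ∂P := lintegral_congr hdecomp
      _ = ∑' n : ℕ, ∫⁻ ω, Set.indicator {ω' | N ω' = n}
            (fun ω' => ∑ i ∈ Finset.Icc 1 n, F i ω') ω ∂P :=
          lintegral_tsum fun n => (hGmeas n).aemeasurable
      _ = ∑' n : ℕ, P {ω | N ω = n} * ((n : ℝ≥0∞) * E₁) := tsum_congr hterm
      _ = (∑' n : ℕ, (n : ℝ≥0∞) * P {ω | N ω = n}) * E₁ := by
          rw [← ENNReal.tsum_mul_right]
          exact tsum_congr fun n => by ring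
      _ = ENNReal.ofReal μ * E₁ := by
          have : ∀ n : ℕ, (n : ℝ≥0∞) * P {ω | N ω = n}
              = (n : ℝ≥0∞) * ENNReal.ofReal (Real.exp (-μ) * μ ^ n / (Nat.factorial n)) :=
            fun n => by rw [hNpoisson n]
          rw [tsum_congr this, poisson_mean_series μ hμ]
  calc ∫⁻ ω, ENNReal.ofReal (Finset.fold max 0 (fun i => (X i ω) ^ 2) (Finset.Icc 1 (N ω))) ∂P
      ≤ ∫⁻ ω, (ENNReal.ofReal (y ^ 2) + ∑ i ∈ Finset.Icc 1 (N ω), F i ω) ∂P :=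
        lintegral_mono hpt
    _ = ENNReal.ofReal (y ^ 2) + ∫⁻ ω, ∑ i ∈ Finset.Icc 1 (N ω), F i ω ∂P := by
        rw [lintegral_add_left measurable_const, lintegral_const, measure_univ, mul_one]
    _ = ENNReal.ofReal (y ^ 2) + ENNReal.ofReal μ *
          ∫⁻ ω, ENNReal.ofReal (if y < |X 1 ω| then (X 1 ω) ^ 2 else 0) ∂P := by
        rw [hkey]
end

section
/- Let (N_s)_{s≥0} be a jointly measurable family of ℕ-valued random variables on a probability space such that the zero state is absorbing: almost surely, if N_u(ω) = 0 for some u ≥ 0 then N_s(ω) = 0 for all s ≥ u. Suppose there exist constants C', C'' ∈ (0,∞) such that for all t ≥ 1, P(N_{√t} > 0) ≤ C'/√t and E[ ∫_0^{√t} N_s ds ] ≤ C'' √t. Then for all t ≥ 1, P( ∫_0^∞ N_s ds ≥ t ) ≤ (C' + C'')/√t. -/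
open MeasureTheory Filter

/-- Let `(N s)_{s ≥ 0}` be a jointly measurable family of `ℕ`-valued random
variables such that the zero state is absorbing. If there are constants `C', C'' ∈ (0, ∞)`
such that for all `t ≥ 1`, `P(N √t > 0) ≤ C'/√t` and `E[∫_0^{√t} N_s ds] ≤ C'' √t`, then for
all `t ≥ 1`, `P(∫_0^∞ N_s ds ≥ t) ≤ (C' + C'')/√t`. -/
theorem tree_length_tail_bound
    {Ω : Type*} [MeasurableSpace Ω] (P : Measure Ω) [IsProbabilityMeasure P]
    (N : ℝ → Ω → ℕ)
    (hNmeas : Measurable fun p : ℝ × Ω => N p.1 p.2)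
    (habs : ∀ᵐ ω ∂P, ∀ u s : ℝ, 0 ≤ u → u ≤ s → N u ω = 0 → N s ω = 0)
    (C' C'' : ℝ) (hC' : 0 < C') (hC'' : 0 < C'')
    (hsurv : ∀ t : ℝ, 1 ≤ t →
      P {ω | 0 < N (Real.sqrt t) ω} ≤ ENNReal.ofReal (C' / Real.sqrt t))
    (hocc : ∀ t : ℝ, 1 ≤ t →
      ∫⁻ ω, (∫⁻ s in Set.Icc 0 (Real.sqrt t), (N s ω : ENNReal)) ∂P
        ≤ ENNReal.ofReal (C'' * Real.sqrt t)) :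
    ∀ t : ℝ, 1 ≤ t →
      P {ω | ENNReal.ofReal t ≤ ∫⁻ s in Set.Ici (0 : ℝ), (N s ω : ENNReal)}
        ≤ ENNReal.ofReal ((C' + C'') / Real.sqrt t) := by

  intro t ht
  have ht0 : (0:ℝ) < t := lt_of_lt_of_le one_pos ht
  set r := Real.sqrt t with hr
  have hr0 : 0 < r := Real.sqrt_pos.mpr ht0
  set f : Ω → ENNReal := fun ω => ∫⁻ s in Set.Icc 0 r, (N s ω : ENNReal) with hf
  have hmeasf : Measurable f := by
    have h1 : Measurable fun p : Ω × ℝ => (N p.2 p.1 : ENNReal) := by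
      have : Measurable fun n : ℕ => (n : ENNReal) := measurable_from_top
      exact this.comp (hNmeas.comp measurable_swap)
    exact Measurable.lintegral_prod_right (f := fun (ω : Ω) (s : ℝ) => (N s ω : ENNReal)) h1
  set B := {ω | ENNReal.ofReal t ≤ f ω} with hB
  set G := {ω | 0 < N r ω} with hG
  -- a.e. inclusion
  have hsub : ({ω | ENNReal.ofReal t ≤ ∫⁻ s in Set.Ici (0:ℝ), (N s ω : ENNReal)} : Set Ω)
      ≤ᵐ[P] (B ∪ G : Set Ω) := by
    filter_upwards [habs] with ω hω hmem
    simp only [Set.mem_union, hB, hG, Set.mem_setOf_eq]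
    by_cases hNr : N r ω = 0
    · left
      have hzero : ∀ s ∈ Set.Ioi r, (N s ω : ENNReal) = 0 := by
        intro s hs
        have := hω r s hr0.le (le_of_lt hs) hNr
        simp [this]
      have hunion : Set.Ici (0:ℝ) = Set.Icc 0 r ∪ Set.Ioi r := by
        ext x; simp [Set.mem_Icc, Set.mem_Ioi, Set.mem_Ici]
        constructor
        · intro hx; by_cases h : x ≤ r
          · exact Or.inl ⟨hx, h⟩
          · exact Or.inr (lt_of_not_ge h)
        · rintro (⟨h1, _⟩ | h1)
          · exact h1
          · exact le_trans hr0.le h1.le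
      have hIoi : (∫⁻ s in Set.Ioi r, (N s ω : ENNReal)) = 0 := by
        rw [← lintegral_zero (μ := volume.restrict (Set.Ioi r))]
        refine setLIntegral_congr_fun measurableSet_Ioi ?_
        exact hzero
      have hsplit : (∫⁻ s in Set.Ici (0:ℝ), (N s ω : ENNReal))
          ≤ f ω + ∫⁻ s in Set.Ioi r, (N s ω : ENNReal) := by
        rw [hunion]
        exact lintegral_union_le _ _ _
      rw [hIoi, add_zero] at hsplit
      exact le_trans hmem hsplit
    · right
      exact Nat.pos_of_ne_zero hNr
  have h1 : P B ≤ ENNReal.ofReal (C'' / r) := by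
    have hmk := meas_ge_le_lintegral_div (μ := P) hmeasf.aemeasurable
      (ε := ENNReal.ofReal t) (by simp [ENNReal.ofReal_eq_zero]; linarith) ENNReal.ofReal_ne_top
    refine le_trans hmk ?_
    have : (∫⁻ ω, f ω ∂P) ≤ ENNReal.ofReal (C'' * r) := hocc t ht
    refine le_trans (ENNReal.div_le_div_right this _) ?_
    rw [← ENNReal.ofReal_div_of_pos ht0]
    apply ENNReal.ofReal_le_ofReal
    rw [show t = r * r from (Real.mul_self_sqrt ht0.le).symm]
    rw [show C'' * r / (r * r) = C'' / r from by field_simp]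
  have h2 : P G ≤ ENNReal.ofReal (C' / r) := hsurv t ht
  calc P {ω | ENNReal.ofReal t ≤ ∫⁻ s in Set.Ici (0:ℝ), (N s ω : ENNReal)}
      ≤ P (B ∪ G) := measure_mono_ae hsub
    _ ≤ P B + P G := measure_union_le _ _
    _ ≤ ENNReal.ofReal (C'' / r) + ENNReal.ofReal (C' / r) := add_le_add h1 h2
    _ = ENNReal.ofReal ((C' + C'') / r) := by
        rw [← ENNReal.ofReal_add (by positivity) (by positivity)]
        ring_nf
end
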